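/- Let p and q be distinct primes both dividing the positive integer n, and let a = ord_p(n) ≥ 1 be the exact power of p dividing n. Then the product (X^{n/(pq)} − 1) · Φ_{n p^{−a}}(X^{p^{a−1}}) divides X^{n/p} − 1 in ℤ[X]. -/

import Mathlib

open Polynomial

lemma aux_expand_dvd (p t k : ℕ) (hp : p.Prime) (ht : p ∣ t) :
    expand ℤ (p ^ k) (cyclotomic t ℤ) = cyclotomic (p ^ k * t) ℤ := by
  induction k with
  | zero => simp
  | succ k ih =>
      rw [pow_succ, mul_comm (p ^ k) p, expand_mul, ih,
        cyclotomic_expand_eq_cyclotomic hp (ht.mul_left (p ^ k))]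
      congr 1
      ring

lemma aux_expand_prod (p m k : ℕ) (hp : p.Prime) (hm : ¬ p ∣ m) :
    expand ℤ (p ^ k) (cyclotomic m ℤ) =
      ∏ i ∈ Finset.range (k + 1), cyclotomic (p ^ i * m) ℤ := by
  induction k with
  | zero => simp
  | succ k ih =>
      have hkm : p ^ k * (m * p) = p ^ (k + 1) * m := by ring
      rw [pow_succ, expand_mul, cyclotomic_expand_eq_cyclotomic_mul hp hm, map_mul, ih,
        aux_expand_dvd p (m * p) k hp (dvd_mul_left p m), hkm]
      conv_rhs => rw [Finset.prod_range_succ]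
      rw [mul_comm]

theorem stmt_6 (p q n : ℕ) (hp : p.Prime) (hq : q.Prime) (hpq : p ≠ q)
    (hn : 0 < n) (hpn : p ∣ n) (hqn : q ∣ n)
    (a : ℕ) (ha : a = n.factorization p) :
    (X ^ (n / (p * q)) - 1) * (cyclotomic (n / p ^ a) ℤ).comp (X ^ p ^ (a - 1)) ∣
      X ^ (n / p) - 1 := by
  set m := n / p ^ a with hm
  have ha1 : 1 ≤ a := by
    rw [ha]
    exact hp.factorization_pos_of_dvd hn.ne' hpn
  have hpm : ¬ p ∣ m := by
    rw [hm, ha]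
    exact Nat.not_dvd_ordCompl hp hn.ne'
  have hnm : p ^ a * m = n := by
    rw [hm, ha]
    exact Nat.ordProj_mul_ordCompl_eq_self n p
  have hm0 : 0 < m := by
    rcases Nat.eq_zero_or_pos m with h | h
    · rw [h, mul_zero] at hnm; omega
    · exact h
  have hqp : Nat.Coprime q p := (Nat.coprime_primes hq hp).mpr (Ne.symm hpq)
  have hqm : q ∣ m := (hqp.pow_right a).dvd_of_dvd_mul_left (hnm ▸ hqn)
  have hnp : n / p = p ^ (a - 1) * m := by
    rw [← hnm]
    have : p ^ a = p * p ^ (a - 1) := by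
      rw [← pow_succ', Nat.sub_add_cancel ha1]
    rw [this, mul_assoc, Nat.mul_div_cancel_left _ hp.pos]
  have hnpq : n / (p * q) = p ^ (a - 1) * (m / q) := by
    rw [← Nat.div_div_eq_div_mul, hnp, Nat.mul_div_assoc _ hqm]
  have hmq0 : 0 < m / q := Nat.div_pos (Nat.le_of_dvd hm0 hqm) hq.pos
  have hmqlt : m / q < m := Nat.div_lt_self hm0 hq.one_lt
  have hnpq0 : 0 < n / (p * q) := by
    rw [hnpq]; exact Nat.mul_pos (Nat.pow_pos hp.pos) hmq0
  have hnp0 : 0 < n / p := by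
    rw [hnp]; exact Nat.mul_pos (Nat.pow_pos hp.pos) hm0
  -- rewrite the cyclotomic composition
  have hcomp : (cyclotomic m ℤ).comp (X ^ p ^ (a - 1)) =
      ∏ i ∈ Finset.range a, cyclotomic (p ^ i * m) ℤ := by
    rw [← expand_eq_comp_X_pow, aux_expand_prod p m (a - 1) hp hpm,
      Nat.sub_add_cancel ha1]
  set T : Finset ℕ := (Finset.range a).image (fun i => p ^ i * m) with hT
  have hinj : Set.InjOn (fun i => p ^ i * m) (Finset.range a) := by
    intro i _ j _ hij
    have : p ^ i = p ^ j := Nat.eq_of_mul_eq_mul_right hm0 hij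
    exact Nat.pow_right_injective hp.two_le this
  have hTprod : ∏ d ∈ T, cyclotomic d ℤ =
      ∏ i ∈ Finset.range a, cyclotomic (p ^ i * m) ℤ :=
    Finset.prod_image fun i hi j hj h => hinj hi hj h
  have hdisj : Disjoint (n / (p * q)).divisors T := by
    rw [Finset.disjoint_left]
    rintro d hd hdT
    rw [hT, Finset.mem_image] at hdT
    obtain ⟨i, _, rfl⟩ := hdT
    have hdvd : p ^ i * m ∣ n / (p * q) := (Nat.mem_divisors.mp hd).1
    have hmd : m ∣ p ^ (a - 1) * (m / q) := by
      rw [← hnpq]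
      exact (dvd_mul_left m (p ^ i)).trans hdvd
    have hcop : Nat.Coprime m (p ^ (a - 1)) :=
      ((Nat.Prime.coprime_iff_not_dvd hp).mpr hpm).symm.pow_right _
    have := hcop.dvd_of_dvd_mul_left hmd
    have := Nat.le_of_dvd hmq0 this
    omega
  have hsub : (n / (p * q)).divisors ∪ T ⊆ (n / p).divisors := by
    intro d hd
    rw [Finset.mem_union] at hd
    rw [Nat.mem_divisors]
    refine ⟨?_, hnp0.ne'⟩
    rcases hd with hd | hd
    · have h1 : d ∣ n / (p * q) := (Nat.mem_divisors.mp hd).1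
      have h2 : n / (p * q) ∣ n / p := by
        rw [hnpq, hnp]
        exact mul_dvd_mul_left _ (Nat.div_dvd_of_dvd hqm)
      exact h1.trans h2
    · rw [hT, Finset.mem_image] at hd
      obtain ⟨i, hi, rfl⟩ := hd
      rw [Finset.mem_range] at hi
      rw [hnp]
      exact mul_dvd_mul (pow_dvd_pow p (by omega)) dvd_rfl
  calc (X ^ (n / (p * q)) - 1) * (cyclotomic m ℤ).comp (X ^ p ^ (a - 1))
      = ∏ d ∈ (n / (p * q)).divisors ∪ T, cyclotomic d ℤ := by
        rw [← prod_cyclotomic_eq_X_pow_sub_one hnpq0, hcomp, ← hTprod,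
          Finset.prod_union hdisj]
    _ ∣ ∏ d ∈ (n / p).divisors, cyclotomic d ℤ :=
        Finset.prod_dvd_prod_of_subset _ _ _ hsub
    _ = X ^ (n / p) - 1 := prod_cyclotomic_eq_X_pow_sub_one hnp0 ℤ
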